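/- Let r ≥ 2, let G=(V,E) be a finite simple graph containing no copy of the complete graph K_{r+1} as a subgraph (i.e., no r+1 pairwise adjacent vertices), and let 1 ≤ k ≤ |V|. Then ε_k(G) ≤ (1 − 1/r)·k²/2 + (4k−2)·√k. -/

import Mathlib

open Finset

open Matrix

/-- The sum of the `k` largest values of `ev` (with multiplicity), expressed as the
supremum over all `k`-element index subsets of the sum of the corresponding values. -/
noncomputable def sumKLargest {n : Type*} [Fintype n] (ev : n → ℝ) (k : ℕ) : ℝ :=
  sSup {x : ℝ | ∃ s : Finset n, s.card = k ∧ x = ∑ i ∈ s, ev i}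

/-- `ε_k(G) = λ_1(L(G)) + ⋯ + λ_k(L(G)) - |E(G)|`, where
`λ_1 ≥ λ_2 ≥ ⋯` are the eigenvalues of the Laplacian matrix of `G`. -/
noncomputable def epsK {V : Type*} [Fintype V] [DecidableEq V] (G : SimpleGraph V)
    [DecidableRel G.Adj] (k : ℕ) : ℝ :=
  sumKLargest (SimpleGraph.posSemidef_lapMatrix ℝ G).isHermitian.eigenvalues k
    - G.edgeFinset.card

section MS
variable {V : Type*} [Fintype V] [DecidableEq V] (G : SimpleGraph V) [DecidableRel G.Adj]

private noncomputable def objS (p : V → ℝ) (w : V) : ℝ := ∑ v, if G.Adj w v then p v else 0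

private noncomputable def obj (p : V → ℝ) : ℝ := ∑ w, p w * objS G p w

private lemma obj_eq (p : V → ℝ) :
    obj G p = ∑ u, ∑ v, if G.Adj u v then p u * p v else 0 := by
  unfold obj objS
  refine Finset.sum_congr rfl fun w _ => ?_
  rw [Finset.mul_sum]
  exact Finset.sum_congr rfl fun v _ => by split_ifs <;> ring

private lemma obj_expand (p e : V → ℝ) :
    obj G (fun x => p x + e x)
      = obj G p + (∑ w, p w * objS G e w + ∑ w, e w * objS G p w)
        + ∑ w, e w * objS G e w := by
  have hadd : ∀ (f g : V → ℝ) (w : V),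
      objS G (fun x => f x + g x) w = objS G f w + objS G g w := by
    intro f g w
    unfold objS
    rw [← Finset.sum_add_distrib]
    exact Finset.sum_congr rfl fun v _ => by split_ifs <;> ring
  unfold obj
  simp_rw [hadd]
  rw [← Finset.sum_add_distrib, ← Finset.sum_add_distrib, ← Finset.sum_add_distrib]
  exact Finset.sum_congr rfl fun w _ => by ring

private lemma cross_symm (p e : V → ℝ) :
    ∑ w, p w * objS G e w = ∑ w, e w * objS G p w := by
  have key : ∀ q s : V → ℝ,
      ∑ w, q w * objS G s w = ∑ w, ∑ v, if G.Adj w v then q w * s v else 0 := by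
    intro q s
    unfold objS
    refine Finset.sum_congr rfl fun w _ => ?_
    rw [Finset.mul_sum]
    exact Finset.sum_congr rfl fun v _ => by split_ifs <;> ring
  rw [key, key, Finset.sum_comm]
  refine Finset.sum_congr rfl fun w _ => Finset.sum_congr rfl fun v _ => ?_
  by_cases h : G.Adj w v
  · rw [if_pos h, if_pos h.symm]; ring
  · rw [if_neg h, if_neg (fun hh => h hh.symm)]

private lemma ms_step (p : V → ℝ) (hp : ∀ w, 0 ≤ p w) (u v : V) (hu : p u ≠ 0) (hv : p v ≠ 0)
    (hne : u ≠ v) (hna : ¬ G.Adj u v) (hle : objS G p u ≤ objS G p v) :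
    ∃ p' : V → ℝ, (∀ w, 0 ≤ p' w) ∧ ((∑ w, p' w) = ∑ w, p w) ∧ obj G p ≤ obj G p' ∧
      (univ.filter fun w => p' w ≠ 0) ⊆ (univ.filter fun w => p w ≠ 0).erase u := by
  set t := p u with ht
  set δ : V → ℝ := fun w => (if w = v then (1:ℝ) else 0) - (if w = u then 1 else 0) with hδ
  have ht0 : 0 ≤ t := hp u
  have hneq : v ≠ u := Ne.symm hne
  have hδu : δ u = -1 := by simp [hδ, hne]
  have hδv : δ v = 1 := by simp [hδ, hneq]
  have hδw : ∀ w, w ≠ u → w ≠ v → δ w = 0 := by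
    intro w h1 h2; simp [hδ, h1, h2]
  have hval : ∀ w, p w + t * δ w
      = if w = u then 0 else (if w = v then p v + t else p w) := by
    intro w
    by_cases h1 : w = u
    · subst h1; rw [hδu]; simp [ht]
    · by_cases h2 : w = v
      · subst h2; rw [hδv]; simp [h1]
      · rw [hδw w h1 h2]; simp [h1, h2]
  have hsmul : ∀ (f : V → ℝ) (w : V), objS G (fun x => t * f x) w = t * objS G f w := by
    intro f w; unfold objS
    rw [Finset.mul_sum]
    exact Finset.sum_congr rfl fun x _ => by split_ifs <;> ring
  refine ⟨fun w => p w + t * δ w, ?_, ?_, ?_, ?_⟩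
  · intro w
    show 0 ≤ p w + t * δ w
    rw [hval w]
    split_ifs with h1 h2
    · exact le_rfl
    · have := hp v; linarith
    · exact hp w
  · show (∑ w, (p w + t * δ w)) = ∑ w, p w
    rw [Finset.sum_add_distrib]
    have h0 : ∑ w, t * δ w = 0 := by
      rw [← Finset.mul_sum]
      have : ∑ w, δ w = 0 := by
        simp [hδ, Finset.sum_sub_distrib]
      rw [this, mul_zero]
    rw [h0, add_zero]
  · -- objective does not decrease
    have h3 : ∑ w, t * δ w * objS G p w = t * (objS G p v - objS G p u) := by
      have hh : ∀ w, t * δ w * objS G p w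
          = t * ((if w = v then objS G p w else 0) - (if w = u then objS G p w else 0)) := by
        intro w; simp only [hδ]; split_ifs <;> ring
      simp_rw [hh, ← Finset.mul_sum, Finset.sum_sub_distrib]
      simp
    have hSδ : ∀ w, objS G δ w =
        (if G.Adj w v then (1:ℝ) else 0) - (if G.Adj w u then 1 else 0) := by
      intro w
      unfold objS
      have hterm : ∀ x, (if G.Adj w x then δ x else 0)
          = (if x = v then (if G.Adj w v then (1:ℝ) else 0) else 0)
            - (if x = u then (if G.Adj w u then (1:ℝ) else 0) else 0) := by
        intro x
        by_cases h1 : x = v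
        · subst h1
          rw [if_pos rfl, if_neg (Ne.symm hne), hδv]
          split_ifs <;> ring
        · by_cases h2 : x = u
          · subst h2
            rw [if_neg h1, if_pos rfl, hδu]
            split_ifs <;> ring
          · rw [if_neg h1, if_neg h2, hδw x h2 h1]
            split_ifs <;> ring
      simp_rw [hterm, Finset.sum_sub_distrib]
      simp
    have hδobj : ∑ w, δ w * objS G δ w = 0 := by
      simp_rw [hSδ]
      have hh : ∀ w, δ w * ((if G.Adj w v then (1:ℝ) else 0) - (if G.Adj w u then 1 else 0))
          = (if w = v then ((if G.Adj w v then (1:ℝ) else 0) - (if G.Adj w u then 1 else 0)) else 0)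
            - (if w = u then ((if G.Adj w v then (1:ℝ) else 0) - (if G.Adj w u then 1 else 0)) else 0) := by
        intro w; simp only [hδ]; split_ifs <;> ring
      simp_rw [hh, Finset.sum_sub_distrib]
      rw [Finset.sum_ite_eq' univ v, Finset.sum_ite_eq' univ u]
      have hvu : ¬ G.Adj v u := fun h => hna h.symm
      simp [G.irrefl, hna, hvu]
    have h4 : ∑ w, t * δ w * objS G (fun x => t * δ x) w = t ^ 2 * ∑ w, δ w * objS G δ w := by
      simp_rw [hsmul]
      rw [Finset.mul_sum]
      exact Finset.sum_congr rfl fun w _ => by ring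
    have hover := obj_expand G p (fun w => t * δ w)
    rw [cross_symm G p (fun w => t * δ w), h3, h4, hδobj] at hover
    rw [hover]
    nlinarith [mul_nonneg ht0 (sub_nonneg.2 hle)]
  · intro w hw
    rw [Finset.mem_filter] at hw
    rw [Finset.mem_erase, Finset.mem_filter]
    obtain ⟨-, hw⟩ := hw
    have hw : p w + t * δ w ≠ 0 := hw
    rw [hval w] at hw
    split_ifs at hw with h1 h2
    · exact absurd rfl hw
    · exact ⟨h1, Finset.mem_univ w, by rw [h2]; exact hv⟩
    · exact ⟨h1, Finset.mem_univ w, hw⟩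


theorem motzkin_straus {r : ℕ} (hr : 1 ≤ r) (hG : G.CliqueFree (r + 1)) (p : V → ℝ)
    (hp : ∀ w, 0 ≤ p w) :
    ∑ u, ∑ v, (if G.Adj u v then p u * p v else 0)
      ≤ (1 - 1 / (r : ℝ)) * (∑ w, p w) ^ 2 := by
  have hrpos : (0:ℝ) < r := by exact_mod_cast hr
  have hrfac : (0:ℝ) ≤ 1 - 1 / r := by
    rw [sub_nonneg, div_le_one hrpos]
    exact_mod_cast hr
  suffices H : ∀ N (p : V → ℝ), (∀ w, 0 ≤ p w) →
      (univ.filter fun w => p w ≠ 0).card ≤ N →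
      obj G p ≤ (1 - 1 / (r : ℝ)) * (∑ w, p w) ^ 2 by
    have := H (univ.filter fun w => p w ≠ 0).card p hp le_rfl
    rwa [obj_eq] at this
  intro N
  induction N with
  | zero =>
    intro p hp hcard
    have hall : ∀ w, p w = 0 := by
      intro w
      by_contra h
      have : w ∈ univ.filter fun w => p w ≠ 0 := by simp [h]
      have := Finset.card_pos.mpr ⟨w, this⟩
      omega
    have h1 : obj G p = 0 := by
      unfold obj
      exact Finset.sum_eq_zero fun w _ => by rw [hall w]; ring
    have h2 : (∑ w, p w) = 0 := Finset.sum_eq_zero fun w _ => hall w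
    rw [h1, h2]
    positivity
  | succ N ih =>
    intro p hp hcard
    by_cases hcl : ∀ x, p x ≠ 0 → ∀ y, p y ≠ 0 → x ≠ y → G.Adj x y
    · -- support is a clique
      set T := univ.filter fun w => p w ≠ 0 with hT
      have hTmem : ∀ x ∈ T, p x ≠ 0 := fun x hx => (Finset.mem_filter.mp hx).2
      have hTr : T.card ≤ r := by
        by_contra hlt
        push_neg at hlt
        obtain ⟨t, hts, htc⟩ := Finset.exists_subset_card_eq (show r + 1 ≤ T.card from hlt)
        refine hG t ⟨?_, htc⟩
        intro x hx y hy hxy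
        exact hcl x (hTmem x (hts hx)) y (hTmem y (hts hy)) hxy
      have hsum : (∑ w, p w) = ∑ w ∈ T, p w := by
        refine (Finset.sum_subset (Finset.filter_subset _ _) ?_).symm
        intro x _ hx
        by_contra h
        exact hx (by simp [hT, h])
      have hobj : obj G p ≤ ∑ x ∈ T, ∑ y ∈ T.erase x, p x * p y := by
        rw [obj_eq]
        have e1 : ∑ u, ∑ v, (if G.Adj u v then p u * p v else 0)
            = ∑ x ∈ T, ∑ v, (if G.Adj x v then p x * p v else 0) := by
          refine (Finset.sum_subset (Finset.filter_subset _ _) ?_).symm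
          intro x _ hx
          have : p x = 0 := by by_contra h; exact hx (by simp [hT, h])
          exact Finset.sum_eq_zero fun v _ => by rw [this]; simp
        have e2 : ∀ x, (∑ v, if G.Adj x v then p x * p v else 0)
            = ∑ y ∈ T, (if G.Adj x y then p x * p y else 0) := by
          intro x
          refine (Finset.sum_subset (Finset.filter_subset _ _) ?_).symm
          intro y _ hy
          have : p y = 0 := by by_contra h; exact hy (by simp [hT, h])
          rw [this]; simp
        rw [e1]
        refine Finset.sum_le_sum fun x _ => ?_
        rw [e2 x]
        rw [show (∑ y ∈ T, if G.Adj x y then p x * p y else 0)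
            = ∑ y ∈ T.erase x, if G.Adj x y then p x * p y else 0 from
          (Finset.sum_erase T (by simp)).symm]
        refine Finset.sum_le_sum fun y hy => ?_
        split_ifs with h
        · exact le_rfl
        · exact mul_nonneg (hp x) (hp y)
      rcases Finset.eq_empty_or_nonempty T with hemp | hne
      · rw [hsum, hemp]
        simp only [Finset.sum_empty]
        rw [hemp] at hobj
        simpa using hobj
      · set S := ∑ w ∈ T, p w with hS
        have hcs : S ^ 2 ≤ T.card * ∑ x ∈ T, p x ^ 2 := sq_sum_le_card_mul_sum_sq
        have hc0 : (0:ℝ) < T.card := by exact_mod_cast Finset.card_pos.mpr hne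
        have hexpand : ∑ x ∈ T, ∑ y ∈ T.erase x, p x * p y = S ^ 2 - ∑ x ∈ T, p x ^ 2 := by
          rw [hS, sq, Finset.sum_mul_sum, ← Finset.sum_sub_distrib]
          refine Finset.sum_congr rfl fun x hx => ?_
          rw [← Finset.sum_erase_add T _ hx]
          ring
        have hQ : S ^ 2 / T.card ≤ ∑ x ∈ T, p x ^ 2 := by
          rw [div_le_iff₀ hc0]
          linarith [hcs]
        have hrc : (T.card : ℝ) ≤ r := by exact_mod_cast hTr
        have h1r : 1 / (r:ℝ) ≤ 1 / T.card := one_div_le_one_div_of_le hc0 hrc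
        have : obj G p ≤ (1 - 1 / T.card) * S ^ 2 := by
          rw [sub_mul, one_mul]
          rw [div_mul_eq_mul_div, one_mul]
          have : S^2 / (T.card:ℝ) ≤ ∑ x ∈ T, p x ^ 2 := hQ
          rw [hexpand] at hobj
          linarith
        rw [hsum]
        refine this.trans ?_
        apply mul_le_mul_of_nonneg_right _ (sq_nonneg S)
        linarith
    · push_neg at hcl
      obtain ⟨u, hu, v, hv, hne, hna⟩ := hcl
      have hmem : u ∈ univ.filter fun w => p w ≠ 0 := by simp [hu]
      have hmain : ∀ u v, p u ≠ 0 → p v ≠ 0 → u ≠ v → ¬ G.Adj u v →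
          objS G p u ≤ objS G p v →
          obj G p ≤ (1 - 1 / (r : ℝ)) * (∑ w, p w) ^ 2 := by
        intro u v hu hv hne hna hle
        obtain ⟨p', h1, h2, h3, h4⟩ := ms_step G p hp u v hu hv hne hna hle
        have hmem' : u ∈ univ.filter fun w => p w ≠ 0 := by simp [hu]
        have hcard' : (univ.filter fun w => p' w ≠ 0).card ≤ N := by
          have := Finset.card_le_card h4
          rw [Finset.card_erase_of_mem hmem'] at this
          omega
        have := ih p' h1 hcard'
        rw [h2] at this
        linarith
      rcases le_total (objS G p u) (objS G p v) with hle | hle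
      · exact hmain u v hu hv hne hna hle
      · exact hmain v u hv hu (Ne.symm hne) (fun h => hna h.symm) hle

end MS

theorem numeric_key (k : ℕ) (hk : 1 ≤ k) :
    2 * Real.sqrt ((2 * (k:ℝ) - 1) * (2 * k - 2) * k) + 4 * k
      ≤ 2 * ((4 * (k:ℝ) - 2) * Real.sqrt k) := by
  set a : ℝ := Real.sqrt k with ha
  have hk0 : (0:ℝ) ≤ k := by positivity
  have ha2 : a ^ 2 = k := Real.sq_sqrt hk0
  have ha1 : 1 ≤ a := by
    rw [ha, show (1:ℝ) = Real.sqrt 1 by simp]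
    exact Real.sqrt_le_sqrt (by exact_mod_cast hk)
  have key : Real.sqrt ((2 * (k:ℝ) - 1) * (2 * k - 2) * k) ≤ (4*(k:ℝ)-2) * a - 2*k := by
    rw [Real.sqrt_le_iff]
    constructor
    · rw [← ha2]; nlinarith [sq_nonneg (a-1)]
    · rw [← ha2]
      have hg : 0 ≤ 6*a^4 - 8*a^3 - 3*a^2 + 4*a + 1 := by
        rcases eq_or_lt_of_le hk with h1 | h2
        · have : a = 1 := by rw [ha, ← h1]; simp
          rw [this]; norm_num
        · have h2' : (2:ℝ) ≤ a^2 := by rw [ha2]; exact_mod_cast h2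
          nlinarith [sq_nonneg (a-1), sq_nonneg (a^2-2), sq_nonneg (a^2-a), mul_nonneg (sub_nonneg.2 ha1) (sub_nonneg.2 h2')]
      nlinarith [hg]
  linarith

private lemma half_key (pu pv q : ℝ) (hu1 : pu ≤ 1)
    (hv : pv ≤ 1/2) (hqu : q ^ 2 ≤ pu * (1 - pu)) :
    pu + pv - 2 * q - 1 ≤ pu * pv + 2 * q ^ 2 / (1 - pu) := by
  rcases eq_or_lt_of_le hu1 with h1 | h1
  · have hq : q = 0 := by
      have : q ^ 2 ≤ 0 := by rw [← h1] at hqu; simpa using hqu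
      nlinarith [sq_nonneg q]
    subst hq
    subst h1
    simp
  · have hd : 0 < 1 - pu := by linarith
    have h2 : pu + pv - 2*q - 1 - pu*pv ≤ 2*q^2/(1-pu) := by
      rw [le_div_iff₀ hd]
      nlinarith [sq_nonneg (q + (1-pu)/2), mul_nonneg (sq_nonneg (1-pu)) (by linarith : (0:ℝ) ≤ 1/2 - pv)]
    linarith

theorem pointwise_key (pu pv q : ℝ) (hu0 : 0 ≤ pu) (hu1 : pu ≤ 1) (hv0 : 0 ≤ pv) (hv1 : pv ≤ 1)
    (hqu : q ^ 2 ≤ pu * (1 - pu)) (hqv : q ^ 2 ≤ pv * (1 - pv)) :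
    pu + pv - 2 * q - 1 ≤ pu * pv
      + (if 1 / 2 < pu ∧ 1 / 2 < pv then 2 * |q| else 0)
      + 2 * q ^ 2 / (1 - pu) + 2 * q ^ 2 / (1 - pv) := by
  have hA : 0 ≤ 2 * q ^ 2 / (1 - pu) := div_nonneg (by positivity) (by linarith)
  have hB : 0 ≤ 2 * q ^ 2 / (1 - pv) := div_nonneg (by positivity) (by linarith)
  by_cases h : 1/2 < pu ∧ 1/2 < pv
  · rw [if_pos h]
    have := neg_abs_le q
    nlinarith [abs_nonneg q]
  · rw [if_neg h]
    rcases not_and_or.mp h with h' | h'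
    · push_neg at h'
      have := half_key pv pu q hv1 h' hqv
      linarith
    · push_neg at h'
      have := half_key pu pv q hu1 h' hqu
      linarith


set_option maxHeartbeats 2000000 in
theorem sum_eig_bound {V : Type*} [Fintype V] [DecidableEq V] (G : SimpleGraph V)
    [DecidableRel G.Adj] (r k : ℕ) (hr : 2 ≤ r) (hG : G.CliqueFree (r + 1)) (hk : 1 ≤ k)
    (s : Finset V) (hs : s.card = k) :
    ∑ i ∈ s, (SimpleGraph.posSemidef_lapMatrix ℝ G).isHermitian.eigenvalues i
      ≤ (G.edgeFinset.card : ℝ)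
        + ((1 - 1 / (r : ℝ)) * (k : ℝ) ^ 2 / 2 + (4 * (k : ℝ) - 2) * Real.sqrt k) := by
  set hL := (SimpleGraph.posSemidef_lapMatrix ℝ G).isHermitian with hhL
  set w : V → V → ℝ := fun i => ⇑(hL.eigenvectorBasis i) with hw
  set μ : V → ℝ := hL.eigenvalues with hμ
  -- orthonormality
  have horth := hL.eigenvectorBasis.orthonormal
  rw [orthonormal_iff_ite] at horth
  have hON : ∀ i j, (∑ v, w i v * w j v) = if i = j then (1:ℝ) else 0 := by
    intro i j
    have := horth i j
    rw [PiLp.inner_apply] at this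
    simp at this
    rw [← this]
    exact Finset.sum_congr rfl fun v _ => mul_comm _ _
  -- the projection matrix entries
  set q : V → V → ℝ := fun u v => ∑ i ∈ s, w i u * w i v with hq
  set p : V → ℝ := fun u => q u u with hp
  have hqsymm : ∀ u v, q u v = q v u := by
    intro u v; exact Finset.sum_congr rfl fun i _ => by ring
  have hp0 : ∀ u, 0 ≤ p u := by
    intro u; exact Finset.sum_nonneg fun i _ => mul_self_nonneg _
  have htr : ∑ u, p u = (k : ℝ) := by
    show (∑ u, ∑ i ∈ s, w i u * w i u) = (k:ℝ)
    rw [Finset.sum_comm]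
    have h1 : ∀ i ∈ s, (∑ u, w i u * w i u) = 1 := fun i _ => by rw [hON i i]; simp
    rw [Finset.sum_congr rfl h1, Finset.sum_const, hs, nsmul_eq_mul, mul_one]
  -- P² = P entrywise
  have hmul : ∀ u v, ∑ x, q u x * q x v = q u v := by
    intro u v
    show (∑ x, (∑ i ∈ s, w i u * w i x) * (∑ j ∈ s, w j x * w j v)) = _
    have h1 : ∀ x, (∑ i ∈ s, w i u * w i x) * (∑ j ∈ s, w j x * w j v)
        = ∑ i ∈ s, ∑ j ∈ s, (w i u * w j v) * (w i x * w j x) := by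
      intro x
      rw [Finset.sum_mul_sum]
      exact Finset.sum_congr rfl fun i _ => Finset.sum_congr rfl fun j _ => by ring
    simp_rw [h1]
    rw [Finset.sum_comm]
    have h2 : ∀ i ∈ s, (∑ x, ∑ j ∈ s, (w i u * w j v) * (w i x * w j x))
        = w i u * w i v := by
      intro i hi
      rw [Finset.sum_comm]
      have h3 : ∀ j ∈ s, (∑ x, (w i u * w j v) * (w i x * w j x))
          = if j = i then w i u * w j v else 0 := by
        intro j _
        rw [← Finset.mul_sum, hON i j]
        by_cases h : i = j
        · rw [if_pos h, if_pos h.symm, mul_one]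
        · rw [if_neg h, if_neg (Ne.symm h), mul_zero]
      rw [Finset.sum_congr rfl h3, Finset.sum_ite_eq' s i, if_pos hi]
    exact Finset.sum_congr rfl h2
  -- row norms
  have hrow : ∀ u, ∑ x ∈ univ.erase u, (q u x) ^ 2 = p u - p u ^ 2 := by
    intro u
    have h1 := hmul u u
    rw [← Finset.sum_erase_add _ _ (Finset.mem_univ u)] at h1
    have h2 : ∀ x ∈ univ.erase u, q u x * q x u = (q u x) ^ 2 := by
      intro x _; rw [← hqsymm u x]; ring
    rw [Finset.sum_congr rfl h2] at h1
    have : q u u * q u u = p u ^ 2 := by rw [hp]; ring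
    nlinarith [h1]
  have hp1 : ∀ u, p u ≤ 1 := by
    intro u
    have h1 := hrow u
    have h2 : 0 ≤ p u - p u ^ 2 := h1 ▸ Finset.sum_nonneg fun x _ => sq_nonneg _
    nlinarith [hp0 u]
  have hqb : ∀ u v, u ≠ v → (q u v) ^ 2 ≤ p u * (1 - p u) := by
    intro u v huv
    have h1 : (q u v) ^ 2 ≤ ∑ x ∈ univ.erase u, (q u x) ^ 2 :=
      Finset.single_le_sum (f := fun x => (q u x) ^ 2) (fun x _ => sq_nonneg _)
        (Finset.mem_erase.mpr ⟨Ne.symm huv, Finset.mem_univ v⟩)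
    rw [hrow u] at h1
    nlinarith
  -- trace identity
  have htrace : ∑ i ∈ s, μ i = ∑ u, ∑ v, (G.lapMatrix ℝ) u v * q v u := by
    have h1 : ∀ u v, (G.lapMatrix ℝ) u v * q v u
        = ∑ i ∈ s, (G.lapMatrix ℝ) u v * w i v * w i u := by
      intro u v
      rw [show q v u = ∑ i ∈ s, w i v * w i u from rfl, Finset.mul_sum]
      exact Finset.sum_congr rfl fun i _ => by ring
    have h2 : ∀ i ∈ s, (∑ u, ∑ v, (G.lapMatrix ℝ) u v * w i v * w i u) = μ i := by
      intro i _
      have h3 : ∀ u, (∑ v, (G.lapMatrix ℝ) u v * w i v * w i u)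
          = ((G.lapMatrix ℝ) *ᵥ (w i)) u * w i u := by
        intro u
        rw [show ((G.lapMatrix ℝ) *ᵥ (w i)) u = ∑ v, (G.lapMatrix ℝ) u v * w i v from rfl,
          Finset.sum_mul]
      simp_rw [h3]
      have h4 : (G.lapMatrix ℝ) *ᵥ (w i) = fun u => μ i * w i u := by
        have := hL.mulVec_eigenvectorBasis i
        rw [this]; rfl
      rw [h4]
      have h5 : ∀ u, μ i * w i u * w i u = μ i * (w i u * w i u) := fun u => by ring
      simp_rw [h5]
      rw [← Finset.mul_sum, hON i i, if_pos rfl, mul_one]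
    calc ∑ i ∈ s, μ i
        = ∑ i ∈ s, ∑ u, ∑ v, (G.lapMatrix ℝ) u v * w i v * w i u :=
          Finset.sum_congr rfl fun i hi => (h2 i hi).symm
      _ = ∑ u, ∑ i ∈ s, ∑ v, (G.lapMatrix ℝ) u v * w i v * w i u := Finset.sum_comm
      _ = ∑ u, ∑ v, ∑ i ∈ s, (G.lapMatrix ℝ) u v * w i v * w i u :=
          Finset.sum_congr rfl fun u _ => Finset.sum_comm
      _ = ∑ u, ∑ v, (G.lapMatrix ℝ) u v * q v u :=
          Finset.sum_congr rfl fun u _ => Finset.sum_congr rfl fun v _ => (h1 u v).symm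
  -- adjacency indicator
  set A : V → V → ℝ := fun u v => if G.Adj u v then (1:ℝ) else 0 with hA
  have hA0 : ∀ u v, 0 ≤ A u v := by
    intro u v; simp only [hA]; split_ifs <;> norm_num
  have hA1 : ∀ u v, A u v ≤ 1 := by
    intro u v; simp only [hA]; split_ifs <;> norm_num
  have hAsymm : ∀ u v, A u v = A v u := by
    intro u v; simp only [hA]
    by_cases h : G.Adj u v
    · rw [if_pos h, if_pos h.symm]
    · rw [if_neg h, if_neg (fun hh => h hh.symm)]
  have hAdiag : ∀ u, A u u = 0 := by
    intro u; simp only [hA]; rw [if_neg (G.irrefl)]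
  have hdeg : ∀ u, (∑ v, A u v) = (G.degree u : ℝ) := by
    intro u
    simp only [hA]
    rw [Finset.sum_boole]
    congr 1
    rw [SimpleGraph.degree, SimpleGraph.neighborFinset_eq_filter]
  have hLentry : ∀ u v, (G.lapMatrix ℝ) u v
      = (if u = v then (G.degree u : ℝ) else 0) - A u v := by
    intro u v
    simp only [hA, SimpleGraph.lapMatrix, Matrix.sub_apply, SimpleGraph.degMatrix,
      Matrix.diagonal_apply, SimpleGraph.adjMatrix_apply]
  have hhandshake : ∑ u, (G.degree u : ℝ) = 2 * (G.edgeFinset.card : ℝ) := by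
    rw [← Nat.cast_sum]
    rw [SimpleGraph.sum_degrees_eq_twice_card_edges]
    push_cast
    ring
  -- expansion of the trace over edges
  have hexp : ∑ u, ∑ v, (G.lapMatrix ℝ) u v * q v u
      = ∑ u, (G.degree u : ℝ) * p u - ∑ u, ∑ v, A u v * q u v := by
    have e1 : ∀ u v, (G.lapMatrix ℝ) u v * q v u
        = (if u = v then (G.degree u : ℝ) * q v u else 0) - A u v * q u v := by
      intro u v
      rw [hLentry u v, hqsymm u v]
      split_ifs <;> ring
    simp_rw [e1, Finset.sum_sub_distrib]
    congr 1
    refine Finset.sum_congr rfl fun u _ => ?_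
    rw [Finset.sum_ite_eq univ u (fun v => (G.degree u : ℝ) * q v u), if_pos (Finset.mem_univ u)]
  -- the central quantity
  have hgoal2 : ∑ u, ∑ v, A u v * (p u + p v - 2 * q u v - 1)
      = 2 * (∑ i ∈ s, μ i) - 2 * (G.edgeFinset.card : ℝ) := by
    have e0 : ∀ u v, A u v * (p u + p v - 2 * q u v - 1)
        = A u v * p u + A u v * p v - 2 * (A u v * q u v) - A u v := by
      intro u v; ring
    simp_rw [e0, Finset.sum_sub_distrib, Finset.sum_add_distrib, ← Finset.mul_sum]
    have e1 : ∑ u, ∑ v, A u v * p u = ∑ u, (G.degree u : ℝ) * p u := by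
      refine Finset.sum_congr rfl fun u _ => ?_
      rw [← Finset.sum_mul, hdeg u]
    have e2 : ∑ u, ∑ v, A u v * p v = ∑ u, (G.degree u : ℝ) * p u := by
      rw [Finset.sum_comm]
      refine Finset.sum_congr rfl fun v _ => ?_
      have : ∀ u, A u v * p v = A v u * p v := fun u => by rw [hAsymm]
      simp_rw [this]
      rw [← Finset.sum_mul, hdeg v, mul_comm]
    have e3 : ∑ u, ∑ v, A u v = 2 * (G.edgeFinset.card : ℝ) := by
      rw [← hhandshake]
      exact Finset.sum_congr rfl fun u _ => hdeg u
    rw [e1, e2, e3, htrace, hexp]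
    ring
  -- pointwise bound
  set T1 : V → V → ℝ :=
    fun u v => if 1/2 < p u ∧ 1/2 < p v then 2 * |q u v| else 0 with hT1def
  have hptwise : ∀ u v, A u v * (p u + p v - 2 * q u v - 1)
      ≤ (if G.Adj u v then p u * p v else 0) + A u v * T1 u v
        + A u v * (2 * (q u v) ^ 2 / (1 - p u)) + A u v * (2 * (q u v) ^ 2 / (1 - p v)) := by
    intro u v
    by_cases h : G.Adj u v
    · have hne := G.ne_of_adj h
      have hq2 : (q u v) ^ 2 ≤ p v * (1 - p v) := by
        rw [show q u v = q v u from hqsymm u v]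
        exact hqb v u (Ne.symm hne)
      have := pointwise_key (p u) (p v) (q u v) (hp0 u) (hp1 u) (hp0 v) (hp1 v)
        (hqb u v hne) hq2
      simp only [hA, hT1def, if_pos h, one_mul]
      exact this
    · simp only [hA, hT1def, if_neg h, zero_mul, mul_zero]
      norm_num
  -- row bound for the quotient terms
  have hrowbound : ∀ u, (∑ v, A u v * (2 * (q u v) ^ 2 / (1 - p u))) ≤ 2 * p u := by
    intro u
    have e0 : (∑ v, A u v * (2 * (q u v) ^ 2 / (1 - p u)))
        = ∑ v ∈ univ.erase u, A u v * (2 * (q u v) ^ 2 / (1 - p u)) :=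
      (Finset.sum_erase _ (by rw [hAdiag u]; ring)).symm
    rw [e0]
    have e1 : ∀ v ∈ univ.erase u, A u v * (2 * (q u v) ^ 2 / (1 - p u))
        ≤ 2 * (q u v) ^ 2 / (1 - p u) := by
      intro v _
      have h2 : 0 ≤ 2 * (q u v) ^ 2 / (1 - p u) :=
        div_nonneg (by positivity) (by linarith [hp1 u])
      nlinarith [hA0 u v, hA1 u v]
    refine (Finset.sum_le_sum e1).trans ?_
    rcases eq_or_lt_of_le (hp1 u) with h | h
    · have h0 : ∑ x ∈ univ.erase u, (q u x) ^ 2 = 0 := by rw [hrow u, h]; norm_num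
      have hz := (Finset.sum_eq_zero_iff_of_nonneg (fun x _ => sq_nonneg (q u x))).mp h0
      have : ∑ v ∈ univ.erase u, 2 * (q u v) ^ 2 / (1 - p u) = 0 :=
        Finset.sum_eq_zero fun v hv => by rw [hz v hv]; simp
      rw [this]
      linarith [hp0 u]
    · have hd : 0 < 1 - p u := by linarith
      have e2 : ∀ v ∈ univ.erase u, 2 * (q u v) ^ 2 / (1 - p u)
          = (q u v) ^ 2 * (2 / (1 - p u)) := fun v _ => by ring
      rw [Finset.sum_congr rfl e2, ← Finset.sum_mul, hrow u]
      have e3 : (p u - p u ^ 2) * (2 / (1 - p u)) = 2 * p u := by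
        field_simp
      rw [e3]
  -- sum bound for the second quotient (anchored at v)
  have hS3 : ∑ u, ∑ v, A u v * (2 * (q u v) ^ 2 / (1 - p v)) ≤ 2 * (k : ℝ) := by
    rw [Finset.sum_comm]
    have e1 : ∀ v, (∑ u, A u v * (2 * (q u v) ^ 2 / (1 - p v)))
        = ∑ u, A v u * (2 * (q v u) ^ 2 / (1 - p v)) := by
      intro v
      refine Finset.sum_congr rfl fun u _ => ?_
      rw [hAsymm u v, hqsymm u v]
    calc ∑ v, ∑ u, A u v * (2 * (q u v) ^ 2 / (1 - p v))
        = ∑ v, ∑ u, A v u * (2 * (q v u) ^ 2 / (1 - p v)) :=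
          Finset.sum_congr rfl fun v _ => e1 v
      _ ≤ ∑ v, 2 * p v := Finset.sum_le_sum fun v _ => hrowbound v
      _ = 2 * (k : ℝ) := by rw [← Finset.mul_sum, htr]
  have hS2 : ∑ u, ∑ v, A u v * (2 * (q u v) ^ 2 / (1 - p u)) ≤ 2 * (k : ℝ) := by
    calc ∑ u, ∑ v, A u v * (2 * (q u v) ^ 2 / (1 - p u))
        ≤ ∑ u, 2 * p u := Finset.sum_le_sum fun u _ => hrowbound u
      _ = 2 * (k : ℝ) := by rw [← Finset.mul_sum, htr]
  -- Motzkin-Straus bound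
  have hMS : ∑ u, ∑ v, (if G.Adj u v then p u * p v else 0)
      ≤ (1 - 1 / (r : ℝ)) * (k : ℝ) ^ 2 := by
    have := motzkin_straus G (by omega : 1 ≤ r) hG p hp0
    rwa [htr] at this
  -- the T1 sum
  set B : Finset V := univ.filter (fun v => 1/2 < p v) with hB
  set D : Finset (V × V) := B.offDiag with hD
  have hBcard : (B.card : ℝ) < 2 * k := by
    rcases Finset.eq_empty_or_nonempty B with hemp | hne
    · rw [hemp]
      simp only [Finset.card_empty, Nat.cast_zero]
      have : (1:ℝ) ≤ k := by exact_mod_cast hk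
      linarith
    · have h1 : ∑ v ∈ B, (1/2 : ℝ) < ∑ v ∈ B, p v :=
        Finset.sum_lt_sum_of_nonempty hne fun v hv => (Finset.mem_filter.mp hv).2
      have h2 : ∑ v ∈ B, p v ≤ ∑ v, p v :=
        Finset.sum_le_sum_of_subset_of_nonneg (Finset.filter_subset _ _)
          fun v _ _ => hp0 v
      rw [htr] at h2
      rw [Finset.sum_const] at h1
      have : (B.card : ℝ) * (1/2) < (k : ℝ) := by
        refine lt_of_le_of_lt (le_of_eq ?_) (h1.trans_le h2)
        rw [nsmul_eq_mul]
      linarith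
  have hBnat : B.card ≤ 2 * k - 1 := by
    have : B.card < 2 * k := by exact_mod_cast hBcard
    omega
  have hDcard : (D.card : ℝ) ≤ (2 * (k:ℝ) - 1) * (2 * k - 2) := by
    rw [hD, Finset.offDiag_card]
    have h1 : B.card * B.card - B.card ≤ (2*k-1)*(2*k-2) := by
      calc B.card * B.card - B.card = B.card * (B.card - 1) := by
            rw [Nat.mul_sub, Nat.mul_one]
        _ ≤ (2*k-1)*(2*k-2) := Nat.mul_le_mul hBnat (by omega)
    have h2 : ((B.card * B.card - B.card : ℕ) : ℝ) ≤ (((2*k-1)*(2*k-2) : ℕ) : ℝ) := by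
      exact_mod_cast h1
    refine h2.trans (le_of_eq ?_)
    have h3 : (1:ℕ) ≤ 2*k := by omega
    have h4 : (2:ℕ) ≤ 2*k := by omega
    push_cast [Nat.cast_sub h3, Nat.cast_sub h4]
    ring
  have hqtot : ∑ z ∈ univ ×ˢ univ, (q z.1 z.2) ^ 2 = (k : ℝ) := by
    rw [Finset.sum_product]
    have e1 : ∀ u, (∑ v, (q u v) ^ 2) = p u := by
      intro u
      rw [← Finset.sum_erase_add _ _ (Finset.mem_univ u), hrow u]
      have : (q u u) ^ 2 = p u ^ 2 := by rw [hp]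
      rw [this]
      ring
    rw [Finset.sum_congr rfl fun u _ => e1 u, htr]
  have hqsq : ∑ z ∈ D, (q z.1 z.2) ^ 2 ≤ (k : ℝ) := by
    rw [← hqtot]
    refine Finset.sum_le_sum_of_subset_of_nonneg ?_ fun z _ _ => sq_nonneg _
    intro z hz
    have := Finset.mem_offDiag.mp hz
    exact Finset.mk_mem_product (Finset.mem_univ _) (Finset.mem_univ _)
  have habs : ∑ z ∈ D, |q z.1 z.2| ≤ Real.sqrt ((2*(k:ℝ)-1) * (2*k-2) * k) := by
    have hcs := sq_sum_le_card_mul_sum_sq (s := D) (f := fun z => |q z.1 z.2|)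
    have e1 : ∑ z ∈ D, |q z.1 z.2| ^ 2 = ∑ z ∈ D, (q z.1 z.2) ^ 2 :=
      Finset.sum_congr rfl fun z _ => sq_abs _
    rw [e1] at hcs
    rw [show (2*(k:ℝ)-1) * (2*k-2) * k = ((2*(k:ℝ)-1) * (2*k-2)) * k from by ring]
    rw [← Real.sqrt_sq (Finset.sum_nonneg fun z _ => abs_nonneg (q z.1 z.2))]
    apply Real.sqrt_le_sqrt
    calc (∑ z ∈ D, |q z.1 z.2|) ^ 2 ≤ (D.card : ℝ) * ∑ z ∈ D, (q z.1 z.2) ^ 2 := hcs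
      _ ≤ ((2*(k:ℝ)-1) * (2*k-2)) * k := by
          have hk' : (1:ℝ) ≤ (k:ℝ) := by exact_mod_cast hk
          apply mul_le_mul hDcard hqsq (Finset.sum_nonneg fun z _ => sq_nonneg _)
          nlinarith [hk']
  have hT1 : ∑ u, ∑ v, A u v * T1 u v ≤ 2 * Real.sqrt ((2*(k:ℝ)-1) * (2*k-2) * k) := by
    have e0 : ∑ u, ∑ v, A u v * T1 u v = ∑ z ∈ univ ×ˢ univ, A z.1 z.2 * T1 z.1 z.2 := by
      rw [Finset.sum_product]
    rw [e0]
    have e1 : ∑ z ∈ univ ×ˢ univ, A z.1 z.2 * T1 z.1 z.2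
        = ∑ z ∈ D, A z.1 z.2 * T1 z.1 z.2 := by
      refine (Finset.sum_subset ?_ ?_).symm
      · intro z _; exact Finset.mk_mem_product (Finset.mem_univ _) (Finset.mem_univ _)
      · intro z _ hz
        rw [hD, Finset.mem_offDiag] at hz
        push_neg at hz
        by_cases h1 : z.1 ∈ B
        · by_cases h2 : z.2 ∈ B
          · have : z.1 = z.2 := hz h1 h2
            rw [show A z.1 z.2 = 0 from this ▸ hAdiag z.1]
            ring
          · have : T1 z.1 z.2 = 0 := by
              simp only [hT1def]
              rw [if_neg]
              intro hcon
              exact h2 (Finset.mem_filter.mpr ⟨Finset.mem_univ _, hcon.2⟩)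
            rw [this, mul_zero]
        · have : T1 z.1 z.2 = 0 := by
            simp only [hT1def]
            rw [if_neg]
            intro hcon
            exact h1 (Finset.mem_filter.mpr ⟨Finset.mem_univ _, hcon.1⟩)
          rw [this, mul_zero]
    rw [e1]
    have e2 : ∀ z ∈ D, A z.1 z.2 * T1 z.1 z.2 ≤ 2 * |q z.1 z.2| := by
      intro z _
      have ht1 : T1 z.1 z.2 ≤ 2 * |q z.1 z.2| := by
        simp only [hT1def]
        split_ifs
        · exact le_rfl
        · positivity
      have ht0 : 0 ≤ T1 z.1 z.2 := by
        simp only [hT1def]; split_ifs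
        · positivity
        · exact le_rfl
      nlinarith [hA0 z.1 z.2, hA1 z.1 z.2]
    calc ∑ z ∈ D, A z.1 z.2 * T1 z.1 z.2 ≤ ∑ z ∈ D, 2 * |q z.1 z.2| :=
          Finset.sum_le_sum e2
      _ = 2 * ∑ z ∈ D, |q z.1 z.2| := by rw [Finset.mul_sum]
      _ ≤ 2 * Real.sqrt ((2*(k:ℝ)-1) * (2*k-2) * k) := by linarith [habs]
  -- assemble
  have hsplit : ∑ u, ∑ v, A u v * (p u + p v - 2 * q u v - 1)
      ≤ ∑ u, ∑ v, (if G.Adj u v then p u * p v else 0)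
        + ∑ u, ∑ v, A u v * T1 u v
        + ∑ u, ∑ v, A u v * (2 * (q u v) ^ 2 / (1 - p u))
        + ∑ u, ∑ v, A u v * (2 * (q u v) ^ 2 / (1 - p v)) := by
    rw [← Finset.sum_add_distrib, ← Finset.sum_add_distrib, ← Finset.sum_add_distrib]
    refine Finset.sum_le_sum fun u _ => ?_
    rw [← Finset.sum_add_distrib, ← Finset.sum_add_distrib, ← Finset.sum_add_distrib]
    exact Finset.sum_le_sum fun v _ => hptwise u v
  have hnum := numeric_key k hk
  have hfinal : 2 * (∑ i ∈ s, μ i) - 2 * (G.edgeFinset.card : ℝ)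
      ≤ (1 - 1 / (r:ℝ)) * (k:ℝ)^2 + 2 * ((4 * (k:ℝ) - 2) * Real.sqrt k) := by
    rw [← hgoal2]
    calc ∑ u, ∑ v, A u v * (p u + p v - 2 * q u v - 1)
        ≤ _ := hsplit
      _ ≤ (1 - 1 / (r:ℝ)) * (k:ℝ)^2 + 2 * Real.sqrt ((2*(k:ℝ)-1) * (2*k-2) * k)
          + 2 * (k:ℝ) + 2 * (k:ℝ) := by
        exact add_le_add (add_le_add (add_le_add hMS hT1) hS2) hS3
      _ ≤ (1 - 1 / (r:ℝ)) * (k:ℝ)^2 + 2 * ((4 * (k:ℝ) - 2) * Real.sqrt k) := by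
        have : 2 * Real.sqrt ((2*(k:ℝ)-1) * (2*(k:ℝ)-2) * k) + 4 * k
            ≤ 2 * ((4 * (k:ℝ) - 2) * Real.sqrt k) := hnum
        linarith
  linarith


theorem stmt_3 (r : ℕ) (hr : 2 ≤ r) {V : Type*} [Fintype V] [DecidableEq V]
    (G : SimpleGraph V) [DecidableRel G.Adj] (hG : G.CliqueFree (r + 1))
    (k : ℕ) (hk1 : 1 ≤ k) (hkn : k ≤ Fintype.card V) :
    epsK G k ≤ (1 - 1 / (r : ℝ)) * (k : ℝ) ^ 2 / 2 + (4 * (k : ℝ) - 2) * Real.sqrt k := by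
  have hm : (0:ℝ) ≤ (G.edgeFinset.card : ℝ) := Nat.cast_nonneg _
  have hr2 : (2:ℝ) ≤ (r:ℝ) := by exact_mod_cast hr
  have hk' : (1:ℝ) ≤ (k:ℝ) := by exact_mod_cast hk1
  have hfac : (0:ℝ) ≤ 1 - 1/(r:ℝ) := by
    have h0 : 1/(r:ℝ) ≤ 1/2 := by
      apply one_div_le_one_div_of_le <;> linarith
    linarith
  have hRHS : (0:ℝ) ≤ (1 - 1/(r:ℝ)) * (k:ℝ)^2/2 + (4*(k:ℝ)-2) * Real.sqrt k := by
    have h1 : (0:ℝ) ≤ (1 - 1/(r:ℝ)) * (k:ℝ)^2/2 :=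
      div_nonneg (mul_nonneg hfac (sq_nonneg _)) (by norm_num)
    have h2 : (0:ℝ) ≤ (4*(k:ℝ)-2) * Real.sqrt k :=
      mul_nonneg (by linarith) (Real.sqrt_nonneg _)
    linarith
  have hsup : sumKLargest (SimpleGraph.posSemidef_lapMatrix ℝ G).isHermitian.eigenvalues k
      ≤ (G.edgeFinset.card : ℝ)
        + ((1 - 1/(r:ℝ)) * (k:ℝ)^2/2 + (4*(k:ℝ)-2) * Real.sqrt k) := by
    apply Real.sSup_le
    · rintro x ⟨t, ht, rfl⟩
      exact sum_eig_bound G r k hr hG hk1 t ht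
    · linarith
  unfold epsK
  linarith
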